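/- arXiv:2006.02746 — 6 statements merged into one kernel-verified Lean document; each statement's English description precedes it below -/
import Mathlib

section
/- Let x and y be unitary operators on H such that for all vectors ξ, η, ζ ∈ H one has ⟪y η, ζ⟫ • (x ξ) = ⟪x η, ζ⟫ • (y ξ) (this is the equality x ⊗ (y*)ᵀ = y ⊗ (x*)ᵀ on H ⊗ H̄, evaluated against rank-one operators). Then the operators x y* and y* x are both selfadjoint. -/
/-- Part 1 of Lemma 6.1: if `x ⊗ (y*)ᵀ = y ⊗ (x*)ᵀ` (evaluated against rank-one
operators), then `x y*` and `y* x` are selfadjoint. -/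
theorem stmt_0 {H : Type*} [NormedAddCommGroup H] [InnerProductSpace ℂ H] [CompleteSpace H]
    (x y : H →L[ℂ] H)
    (hx : x ∈ unitary (H →L[ℂ] H)) (hy : y ∈ unitary (H →L[ℂ] H))
    (h : ∀ ξ η ζ : H, (inner ℂ (y η) ζ : ℂ) • x ξ = (inner ℂ (x η) ζ : ℂ) • y ξ) :
    IsSelfAdjoint (x * star y) ∧ IsSelfAdjoint (star y * x) := by
  rcases subsingleton_or_nontrivial H with hH | hH
  · haveI : Subsingleton (H →L[ℂ] H) := inferInstance
    exact ⟨Subsingleton.elim _ _, Subsingleton.elim _ _⟩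
  · obtain ⟨η, hη⟩ := exists_ne (0 : H)
    have hinner : ∀ (u : H →L[ℂ] H), star u * u = 1 →
        ∀ a b : H, (inner ℂ (u a) (u b) : ℂ) = inner ℂ a b := by
      intro u hu a b
      rw [← ContinuousLinearMap.adjoint_inner_right, ← ContinuousLinearMap.star_eq_adjoint]
      have : star u (u b) = (star u * u) b := rfl
      rw [this, hu]
      rfl
    have hxin := hinner x ((Unitary.mem_iff.mp hx).1)
    have hyin := hinner y ((Unitary.mem_iff.mp hy).1)
    have hn : (inner ℂ η η : ℂ) ≠ 0 := inner_self_ne_zero.mpr hη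
    set n : ℂ := inner ℂ η η with hn_def
    set c : ℂ := inner ℂ (x η) (y η) / n with hc_def
    have hxy : ∀ ξ, x ξ = c • y ξ := by
      intro ξ
      have h1 := h ξ η (y η)
      rw [hyin η η] at h1
      have : x ξ = (n⁻¹ * inner ℂ (x η) (y η)) • y ξ := by
        rw [mul_smul, ← h1, smul_smul, inv_mul_cancel₀ hn, one_smul]
      rw [this, hc_def, div_eq_inv_mul]
    have hyη : y η ≠ 0 := by
      intro h0
      apply hn
      rw [hn_def, ← hyin η η, h0, inner_zero_left]
    have hc2 : c ^ 2 = 1 := by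
      have h2 := h η η (x η)
      rw [hxin η η, hxy η, inner_smul_right, hyin η η, smul_smul] at h2
      have h3 : (c * n * c - n) • y η = 0 := by
        rw [sub_smul, h2, sub_self]
      have h4 : c * n * c - n = 0 := by
        by_contra h5
        exact hyη (by simpa [smul_eq_zero, h5] using h3)
      have h6 : n * (c ^ 2 - 1) = 0 := by linear_combination h4
      rcases mul_eq_zero.mp h6 with h7 | h7
      · exact absurd h7 hn
      · exact sub_eq_zero.mp h7
    have hcstar : star c = c := by
      have : (c - 1) * (c + 1) = 0 := by linear_combination hc2
      rcases mul_eq_zero.mp this with h8 | h8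
      · rw [sub_eq_zero.mp h8]; simp
      · have : c = -1 := by linear_combination h8
        rw [this]; simp
    have hx_eq : x = c • y := by
      ext ξ; exact hxy ξ
    have h1y : y * star y = 1 := (Unitary.mem_iff.mp hy).2
    have h2y : star y * y = 1 := (Unitary.mem_iff.mp hy).1
    constructor
    · show star (x * star y) = x * star y
      rw [hx_eq, smul_mul_assoc, h1y, star_smul, star_one, hcstar]
    · show star (star y * x) = star y * x
      rw [hx_eq, mul_smul_comm, h2y, star_smul, star_one, hcstar]
end

section
/- Let a, b : ℝ → B(H) be strongly continuous one-parameter groups of unitary operators on H (a₀ = b₀ = 1, a_{s+t} = a_s a_t, b_{s+t} = b_s b_t, and t ↦ a_t ξ, t ↦ b_t ξ are continuous for every ξ ∈ H). Suppose that for every t ∈ ℝ and every bounded operator T on H one has a_t T b_t = b_t* T a_t*. Then a_t = b_{-t} for all t ∈ ℝ. -/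
/-- Part 3 of Lemma 6.1: if `(a_t)`, `(b_t)` are strongly continuous unitary groups and
`J c_t = c_t J`, i.e. `a_t T b_t = b_t* T a_t*` for all `T`, then `a_t = b_{-t}`. -/
theorem stmt_2 {H : Type*} [NormedAddCommGroup H] [InnerProductSpace ℂ H] [CompleteSpace H]
    (a b : ℝ → (H →L[ℂ] H))
    (ha : ∀ t, a t ∈ unitary (H →L[ℂ] H)) (hb : ∀ t, b t ∈ unitary (H →L[ℂ] H))
    (ha0 : a 0 = 1) (haadd : ∀ s t : ℝ, a (s + t) = a s * a t)
    (hb0 : b 0 = 1) (hbadd : ∀ s t : ℝ, b (s + t) = b s * b t)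
    (hacont : ∀ ξ : H, Continuous fun t => a t ξ)
    (hbcont : ∀ ξ : H, Continuous fun t => b t ξ)
    (h : ∀ (t : ℝ) (T : H →L[ℂ] H), a t * T * b t = star (b t) * T * star (a t)) :
    ∀ t : ℝ, a t = b (-t) := by
  have hbs : ∀ t, b t * star (b t) = 1 := fun t => (Unitary.mem_iff.mp (hb t)).2
  have has : ∀ t, star (a t) * a t = 1 := fun t => (Unitary.mem_iff.mp (ha t)).1
  have key1 : ∀ t T, (b t * a t) * T * (b t * a t) = T := by
    intro t T
    calc (b t * a t) * T * (b t * a t)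
        = b t * ((a t * T * b t) * a t) := by noncomm_ring
      _ = b t * ((star (b t) * T * star (a t)) * a t) := by rw [h t T]
      _ = (b t * star (b t)) * T * (star (a t) * a t) := by noncomm_ring
      _ = T := by rw [hbs t, has t, one_mul, mul_one]
  have key2 : ∀ t, (b t * a t) * (b t * a t) = 1 := by
    intro t
    have := key1 t 1
    rwa [mul_one] at this
  have key3 : ∀ t T, (b t * a t) * T = T * (b t * a t) := by
    intro t T
    calc (b t * a t) * T = (b t * a t) * T * 1 := (mul_one _).symm
      _ = (b t * a t) * T * ((b t * a t) * (b t * a t)) := by rw [key2]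
      _ = ((b t * a t) * T * (b t * a t)) * (b t * a t) := by noncomm_ring
      _ = T * (b t * a t) := by rw [key1]
  have hacomm : ∀ s t : ℝ, a s * a t = a t * a s := by
    intro s t
    rw [← haadd, ← haadd, add_comm]
  have key4 : ∀ s t : ℝ, b (s + t) * a (s + t) = (b s * a s) * (b t * a t) := by
    intro s t
    calc b (s + t) * a (s + t)
        = (b s * b t) * (a s * a t) := by rw [hbadd, haadd]
      _ = b s * ((b t * a t) * a s) := by rw [hacomm s t]; noncomm_ring
      _ = b s * (a s * (b t * a t)) := by rw [key3 t (a s)]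
      _ = (b s * a s) * (b t * a t) := by noncomm_ring
  have keyu : ∀ t, b t * a t = 1 := by
    intro t
    have h4 := key4 (t/2) (t/2)
    rw [add_halves] at h4
    rw [h4, key2]
  intro t
  calc a t = 1 * a t := (one_mul _).symm
    _ = (b (-t) * b t) * a t := by rw [← hbadd, neg_add_cancel, hb0]
    _ = b (-t) * (b t * a t) := by rw [mul_assoc]
    _ = b (-t) := by rw [keyu, mul_one]
end

section
/- Let H be a nonzero separable complex Hilbert space and let c ∈ ℝ with c ≠ 0. Let U, V : ℝ → B(H) be families of unitary operators satisfying the Weyl-type commutation relation U_s V_t = exp(i c s t) V_t U_s for all s, t ∈ ℝ. Then there is no nonzero vector ξ ∈ H and no real number e such that U_s ξ = exp(i e s) ξ for all s ∈ ℝ; in other words, the one-parameter family (U_s) has no common eigenvector with eigenvalue character of the form s ↦ exp(i e s). -/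
open scoped InnerProductSpace

/-- A unitary continuous linear map preserves the inner product. -/
lemma unitary_inner_map {H : Type*} [NormedAddCommGroup H] [InnerProductSpace ℂ H]
    [CompleteSpace H] {u : H →L[ℂ] H} (hu : u ∈ unitary (H →L[ℂ] H)) (x y : H) :
    ⟪u x, u y⟫_ℂ = ⟪x, y⟫_ℂ := by
  have h1 : star u * u = 1 := hu.1
  calc ⟪u x, u y⟫_ℂ = ⟪x, (ContinuousLinearMap.adjoint u) (u y)⟫_ℂ := by
        rw [ContinuousLinearMap.adjoint_inner_right]
    _ = ⟪x, (star u * u) y⟫_ℂ := by rw [ContinuousLinearMap.star_eq_adjoint]; rfl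
    _ = ⟪x, y⟫_ℂ := by rw [h1]; rfl

/-- Operator-theoretic core of Corollary 4.4: a Weyl-type commutation relation
`U_s V_t = exp(i c s t) V_t U_s` with `c ≠ 0` on a nonzero separable Hilbert space
forces `(U_s)` to have no common eigenvector with character `s ↦ exp(i e s)`. -/
theorem stmt_3 {H : Type*} [NormedAddCommGroup H] [InnerProductSpace ℂ H] [CompleteSpace H]
    [Nontrivial H] [TopologicalSpace.SeparableSpace H]
    (c : ℝ) (hc : c ≠ 0)
    (U V : ℝ → (H →L[ℂ] H))
    (hU : ∀ s, U s ∈ unitary (H →L[ℂ] H)) (hV : ∀ t, V t ∈ unitary (H →L[ℂ] H))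
    (hcomm : ∀ s t : ℝ, U s * V t = Complex.exp (Complex.I * (c * s * t : ℝ)) • (V t * U s)) :
    ¬ ∃ (ξ : H) (e : ℝ), ξ ≠ 0 ∧ ∀ s : ℝ, U s ξ = Complex.exp (Complex.I * (e * s : ℝ)) • ξ := by
  rintro ⟨ξ, e, hξ, heig⟩
  set f : ℝ → H := fun t => V t ξ with hf
  -- each f t is an eigenvector of U s with eigenvalue exp(i (c t + e) s)
  have hfe : ∀ s t : ℝ, U s (f t) = Complex.exp (Complex.I * ((c * t + e) * s : ℝ)) • f t := by
    intro s t
    have h := congrArg (fun A : H →L[ℂ] H => A ξ) (hcomm s t)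
    simp only [ContinuousLinearMap.mul_apply, ContinuousLinearMap.smul_apply] at h
    rw [heig s] at h
    rw [hf]
    simp only [map_smul] at h
    rw [h, smul_smul, ← Complex.exp_add]
    congr 2
    push_cast
    ring
  -- each f t has the same norm as ξ
  have hnorm : ∀ t, ‖f t‖ = ‖ξ‖ := by
    intro t
    have := unitary_inner_map (hV t) ξ ξ
    have h3 : ‖f t‖ ^ 2 = ‖ξ‖ ^ 2 := by
      rw [← inner_self_eq_norm_sq (𝕜 := ℂ), ← inner_self_eq_norm_sq (𝕜 := ℂ)]
      exact congrArg Complex.re this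
    nlinarith [norm_nonneg (f t), norm_nonneg ξ]
  -- pairwise orthogonality
  have horth : ∀ t t' : ℝ, t ≠ t' → ⟪f t, f t'⟫_ℂ = 0 := by
    intro t t' htt
    set s : ℝ := Real.pi / (c * (t' - t)) with hs
    have hden : c * (t' - t) ≠ 0 := mul_ne_zero hc (sub_ne_zero.2 (Ne.symm htt))
    have key : ⟪f t, f t'⟫_ℂ = ⟪U s (f t), U s (f t')⟫_ℂ :=
      (unitary_inner_map (hU s) _ _).symm
    rw [hfe s t, hfe s t', inner_smul_left, inner_smul_right, ← mul_assoc] at key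
    have hcexp : ∀ r : ℝ, (starRingEnd ℂ) (Complex.exp (Complex.I * r)) =
        Complex.exp (Complex.I * (-r : ℝ)) := by
      intro r
      rw [← Complex.exp_conj]
      push_cast
      rw [map_mul, Complex.conj_I, Complex.conj_ofReal]
      ring_nf
    rw [hcexp, ← Complex.exp_add] at key
    have harg : Complex.I * (-((c * t + e) * s) : ℝ) + Complex.I * ((c * t' + e) * s : ℝ)
        = Complex.I * Real.pi := by
      have : (c * t' + e) * s - (c * t + e) * s = Real.pi := by
        have : (c * t' + e) * s - (c * t + e) * s = c * (t' - t) * s := by ring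
        rw [this, hs, mul_div_cancel₀ _ hden]
      push_cast
      rw [← this]
      push_cast
      ring
    rw [harg, mul_comm Complex.I, Complex.exp_pi_mul_I] at key
    -- key : ⟪f t, f t'⟫ = -1 * ⟪f t, f t'⟫
    have : (2 : ℂ) * ⟪f t, f t'⟫_ℂ = 0 := by linear_combination key
    simpa using this
  -- distance bound
  have hdist : ∀ t t' : ℝ, t ≠ t' → ‖ξ‖ ≤ dist (f t) (f t') := by
    intro t t' htt
    have h0 := horth t t' htt
    have hsq : ‖f t - f t'‖ ^ 2 = ‖f t‖ ^ 2 + ‖f t'‖ ^ 2 := by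
      rw [@norm_sub_sq ℂ, h0]
      simp
    rw [dist_eq_norm]
    nlinarith [norm_nonneg (f t - f t'), norm_nonneg ξ, hnorm t, hnorm t']
  have hpos : 0 < ‖ξ‖ := norm_pos_iff.2 hξ
  -- the balls of radius ‖ξ‖/2 around f t are pairwise disjoint
  have : Countable ℝ := by
    refine Pairwise.countable_of_isOpen_disjoint
      (s := fun t => Metric.ball (f t) (‖ξ‖ / 2)) ?_ (fun t => Metric.isOpen_ball)
      (fun t => Metric.nonempty_ball.2 (by linarith))
    intro t t' htt
    apply Metric.ball_disjoint_ball
    calc ‖ξ‖ / 2 + ‖ξ‖ / 2 = ‖ξ‖ := by ring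
      _ ≤ dist (f t) (f t') := hdist t t' htt
  exact (Cardinal.not_countable_real) Set.countable_univ
end

section
/- For all l, n, m ∈ ℕ one has ∫_𝕋 (1 − q²) ∑_{k=0}^∞ q^{2k} ⟪e_k, A^l C_λ^n (C_λ*)^m e_k⟫ dμ(λ) = δ_{l,0} δ_{n,m} (1 − q²)/(1 − q^{2(n+1)}), where δ denotes the Kronecker delta. (This computes the Haar state of SU_q(2) on the basis monomial α^l γ^n γ^{*m} through the representations ψ^{2,λ} and shows that the map Q_L is isometric on these monomials.) -/
open scoped ComplexConjugate

noncomputable abbrev E2 := lp (fun _ : ℕ => ℂ) 2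
noncomputable abbrev ee (k : ℕ) : E2 := lp.single 2 k (1 : ℂ)

theorem hee (j k : ℕ) : (inner ℂ (ee j) (ee k) : ℂ) = if j = k then 1 else 0 := by
  rw [lp.inner_single_left]
  rcases eq_or_ne j k with h | h
  · simp [h, lp.single_apply_self]
  · simp [lp.single_apply_ne _ _ _ h, h]

theorem coord_eq (v : E2) (j : ℕ) : v j = (inner ℂ (ee j) v : ℂ) := by
  rw [lp.inner_single_left]; simp [RCLike.inner_apply]

theorem pow_eig (T : E2 →L[ℂ] E2) (v : E2) (c : ℂ) (h : T v = c • v) (n : ℕ) :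
    (T ^ n) v = c ^ n • v := by
  induction n with
  | zero => simp
  | succ n ih =>
    rw [pow_succ, ContinuousLinearMap.mul_apply, h, map_smul, ih, smul_smul, pow_succ]
    ring_nf

theorem star_diag (C : E2 →L[ℂ] E2) (c : ℕ → ℂ) (hC : ∀ k, C (ee k) = c k • ee k) (k : ℕ) :
    (star C) (ee k) = (conj (c k)) • ee k := by
  rw [ContinuousLinearMap.star_eq_adjoint]
  apply lp.ext
  funext j
  rw [coord_eq, ContinuousLinearMap.adjoint_inner_right, hC, inner_smul_left, hee]
  rcases eq_or_ne j k with h | h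
  · subst h; simp [lp.single_apply_self]
  · simp [lp.single_apply_ne _ _ _ h, h]

theorem A_pow (A : E2 →L[ℂ] E2) (hA0 : A (ee 0) = 0)
    (hA : ∀ k : ℕ, ∃ s : ℂ, A (ee (k + 1)) = s • ee k) :
    ∀ l k : ℕ, ∃ r : ℂ, (A ^ l) (ee k) = r • ee (k - l) ∧ (k < l → r = 0) := by
  intro l
  induction l with
  | zero => intro k; exact ⟨1, by simp, by omega⟩
  | succ l ih =>
    intro k
    obtain ⟨r, hr, hr0⟩ := ih k
    rw [pow_succ', ContinuousLinearMap.mul_apply, hr, map_smul]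
    rcases Nat.lt_or_ge k (l + 1) with hk | hk
    · refine ⟨0, ?_, fun _ => rfl⟩
      have : k - l = 0 := by omega
      rw [this, hA0, smul_zero, zero_smul]
    · obtain ⟨s, hs⟩ := hA (k - (l + 1))
      have : k - l = (k - (l + 1)) + 1 := by omega
      rw [this, hs, smul_smul]
      exact ⟨r * s, rfl, by omega⟩

theorem A_pow_inner (A : E2 →L[ℂ] E2) (hA0 : A (ee 0) = 0)
    (hA : ∀ k : ℕ, ∃ s : ℂ, A (ee (k + 1)) = s • ee k)
    (l : ℕ) (hl : l ≠ 0) (k : ℕ) : (inner ℂ (ee k) ((A ^ l) (ee k)) : ℂ) = 0 := by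
  obtain ⟨r, hr, hr0⟩ := A_pow A hA0 hA l k
  rw [hr, inner_smul_right, hee]
  rcases Nat.lt_or_ge k l with hk | hk
  · simp [hr0 hk]
  · have : ¬ (k = k - l) := by omega
    simp [this]

theorem geom_aux (q : ℝ) (hq1 : |q| < 1) (s : ℕ) (hs : s ≠ 0) :
    ∑' k : ℕ, ((q:ℂ) ^ s) ^ k = (1 - (q:ℂ) ^ s)⁻¹ := by
  apply tsum_geometric_of_norm_lt_one
  rw [norm_pow, Complex.norm_real, Real.norm_eq_abs]
  exact pow_lt_one₀ (abs_nonneg q) hq1 hs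

theorem one_sub_ne (q : ℝ) (hq1 : |q| < 1) (s : ℕ) (hs : s ≠ 0) :
    (1 : ℂ) - (q:ℂ) ^ s ≠ 0 := by
  intro h
  have h1 : ((q:ℂ)) ^ s = 1 := by linear_combination -h
  have h2 := congrArg (fun z : ℂ => ‖z‖) h1
  simp only [norm_pow, Complex.norm_real, Real.norm_eq_abs, norm_one] at h2
  have := pow_lt_one₀ (abs_nonneg q) hq1 hs
  linarith

theorem exp_prod (θ : ℝ) (n m : ℕ) :
    Complex.exp ((θ:ℂ) * Complex.I) ^ n * Complex.exp (-((θ:ℂ) * Complex.I)) ^ m =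
      Complex.exp ((((n:ℂ) - m) * Complex.I) * θ) := by
  rw [← Complex.exp_nat_mul, ← Complex.exp_nat_mul, ← Complex.exp_add]
  ring_nf

theorem int_exp_ne (n m : ℕ) (h : n ≠ m) :
    ∫ θ in (0:ℝ)..(2*Real.pi), Complex.exp ((((n:ℂ) - m) * Complex.I) * θ) = 0 := by
  have hc : ((n:ℂ) - m) * Complex.I ≠ 0 := by
    apply mul_ne_zero _ Complex.I_ne_zero
    simpa [sub_eq_zero] using h
  rw [integral_exp_mul_complex hc]
  set z : ℤ := (n : ℤ) - m with hz
  have h2 : (((n:ℂ) - m) * Complex.I) * (2*Real.pi : ℝ) = (z : ℂ) * (2 * Real.pi * Complex.I) := by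
    rw [hz]; push_cast; ring
  rw [h2, Complex.exp_int_mul_two_pi_mul_I]
  simp

/-- Computation of the Haar state of `SU_q(2)` on the basis monomials
`α^l γ^n γ^{*m}` through the representations `ψ^{2,λ}`, the circle being
parametrized as `λ = exp(iθ)` with normalized Haar measure `dθ/(2π)`. -/
theorem stmt_6 (q : ℝ) (hq0 : 0 < |q|) (hq1 : |q| < 1)
    (A : lp (fun _ : ℕ => ℂ) 2 →L[ℂ] lp (fun _ : ℕ => ℂ) 2)
    (hA0 : A (lp.single 2 0 (1 : ℂ)) = 0)
    (hA : ∀ k : ℕ, A (lp.single 2 (k + 1) (1 : ℂ)) =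
      ((Real.sqrt (1 - q ^ (2 * (k + 1))) : ℝ) : ℂ) • lp.single 2 k (1 : ℂ))
    (C : ℝ → (lp (fun _ : ℕ => ℂ) 2 →L[ℂ] lp (fun _ : ℕ => ℂ) 2))
    (hC : ∀ (θ : ℝ) (k : ℕ), C θ (lp.single 2 k (1 : ℂ)) =
      (Complex.exp ((θ : ℂ) * Complex.I) * (q : ℂ) ^ k) • lp.single 2 k (1 : ℂ)) :
    ∀ l n m : ℕ,
      (1 / (2 * (Real.pi : ℂ))) *
        ∫ θ in (0 : ℝ)..(2 * Real.pi),
          ((1 - (q : ℂ) ^ 2) * ∑' k : ℕ, (q : ℂ) ^ (2 * k) *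
            (inner ℂ (lp.single 2 k (1 : ℂ))
              ((A ^ l * (C θ) ^ n * (star (C θ)) ^ m) (lp.single 2 k (1 : ℂ))) : ℂ)) =
      (if l = 0 then 1 else 0) * (if n = m then 1 else 0) *
        (((1 - q ^ 2) / (1 - q ^ (2 * (n + 1))) : ℝ) : ℂ) := by
  intro l n m
  have hE : ∀ k : ℕ, lp.single 2 k (1:ℂ) = ee k := fun _ => rfl
  simp only [hE]
  have hA0' : A (ee 0) = 0 := hA0
  have hAex : ∀ k : ℕ, ∃ s : ℂ, A (ee (k + 1)) = s • ee k := fun k => ⟨_, hA k⟩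
  have hC' : ∀ (θ : ℝ) (k : ℕ), C θ (ee k) =
      (Complex.exp ((θ : ℂ) * Complex.I) * (q : ℂ) ^ k) • ee k := hC
  have hCstar : ∀ (θ : ℝ) (k : ℕ), (star (C θ)) (ee k) =
      (Complex.exp (-((θ:ℂ) * Complex.I)) * (q:ℂ) ^ k) • ee k := by
    intro θ k
    rw [star_diag (C θ) (fun k => Complex.exp ((θ:ℂ)*Complex.I) * (q:ℂ)^k) (hC' θ) k,
        map_mul, ← Complex.exp_conj, map_mul, Complex.conj_I, Complex.conj_ofReal, map_pow,
        Complex.conj_ofReal, mul_neg]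
  have hkey : ∀ (θ : ℝ) (k : ℕ),
      ((A ^ l * (C θ) ^ n * (star (C θ)) ^ m) (ee k)) =
        ((Complex.exp ((θ:ℂ)*Complex.I) * (q:ℂ)^k) ^ n *
          (Complex.exp (-((θ:ℂ)*Complex.I)) * (q:ℂ)^k) ^ m) • ((A ^ l) (ee k)) := by
    intro θ k
    rw [ContinuousLinearMap.mul_apply, ContinuousLinearMap.mul_apply,
        pow_eig _ _ _ (hCstar θ k), map_smul, pow_eig _ _ _ (hC' θ k), map_smul, map_smul,
        smul_smul, mul_comm]
  rcases eq_or_ne l 0 with hl | hl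
  · subst hl
    have hval : ∀ (θ : ℝ) (k : ℕ),
        (inner ℂ (ee k) ((A ^ 0 * (C θ) ^ n * (star (C θ)) ^ m) (ee k)) : ℂ) =
        (Complex.exp ((θ:ℂ)*Complex.I) * (q:ℂ)^k) ^ n *
          (Complex.exp (-((θ:ℂ)*Complex.I)) * (q:ℂ)^k) ^ m := by
      intro θ k
      rw [hkey θ k, pow_zero, ContinuousLinearMap.one_apply, inner_smul_right, hee]
      simp
    have hts : ∀ θ : ℝ,
        (∑' k : ℕ, (q:ℂ)^(2*k) *
          (inner ℂ (ee k) ((A ^ 0 * (C θ) ^ n * (star (C θ)) ^ m) (ee k)) : ℂ)) =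
        (Complex.exp ((θ:ℂ)*Complex.I) ^ n * Complex.exp (-((θ:ℂ)*Complex.I)) ^ m) *
          (1 - (q:ℂ)^(n+m+2))⁻¹ := by
      intro θ
      have h1 : ∀ k : ℕ, (q:ℂ)^(2*k) *
          (inner ℂ (ee k) ((A ^ 0 * (C θ) ^ n * (star (C θ)) ^ m) (ee k)) : ℂ) =
          (Complex.exp ((θ:ℂ)*Complex.I) ^ n * Complex.exp (-((θ:ℂ)*Complex.I)) ^ m) *
            ((q:ℂ)^(n+m+2))^k := by
        intro k
        rw [hval θ k]; ring
      rw [tsum_congr h1, tsum_mul_left, geom_aux q hq1 (n+m+2) (by omega)]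
    have hIg : Set.EqOn
        (fun θ : ℝ => ((1 - (q : ℂ) ^ 2) * ∑' k : ℕ, (q : ℂ) ^ (2 * k) *
          (inner ℂ (ee k) ((A ^ 0 * (C θ) ^ n * (star (C θ)) ^ m) (ee k)) : ℂ)))
        (fun θ : ℝ => ((1 - (q : ℂ) ^ 2) * (1 - (q:ℂ)^(n+m+2))⁻¹) *
          Complex.exp ((((n:ℂ) - m) * Complex.I) * θ))
        (Set.uIcc 0 (2*Real.pi)) := by
      intro θ _
      simp only
      rw [hts θ, ← exp_prod θ n m]; ring
    rw [intervalIntegral.integral_congr hIg]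
    rcases eq_or_ne n m with hnm | hnm
    · subst hnm
      have h1 : ∀ θ : ℝ, Complex.exp ((((n:ℂ) - n) * Complex.I) * θ) = 1 := by
        intro θ; simp
      simp only [h1, mul_one]
      rw [intervalIntegral.integral_const]
      have hne : (1 : ℂ) - (q:ℂ)^(n+n+2) ≠ 0 := one_sub_ne q hq1 _ (by omega)
      have hπ : ((Real.pi : ℂ)) ≠ 0 := Complex.ofReal_ne_zero.mpr Real.pi_ne_zero
      have he : 2 * (n + 1) = n + n + 2 := by ring
      simp only [if_true, one_mul]
      rw [sub_zero, Complex.real_smul]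
      push_cast
      rw [he]
      field_simp
    · rw [intervalIntegral.integral_const_mul, int_exp_ne n m hnm]
      simp [hnm]
  · have hzero : ∀ (θ : ℝ) (k : ℕ),
        (inner ℂ (ee k) ((A ^ l * (C θ) ^ n * (star (C θ)) ^ m) (ee k)) : ℂ) = 0 := by
      intro θ k
      rw [hkey θ k, inner_smul_right, A_pow_inner A hA0' hAex l hl k, mul_zero]
    have h0 : Set.EqOn
        (fun θ : ℝ => ((1 - (q : ℂ) ^ 2) * ∑' k : ℕ, (q : ℂ) ^ (2 * k) *
          (inner ℂ (ee k) ((A ^ l * (C θ) ^ n * (star (C θ)) ^ m) (ee k)) : ℂ)))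
        (fun _ : ℝ => (0:ℂ)) (Set.uIcc 0 (2*Real.pi)) := by
      intro θ _
      simp only
      have h2 : ∀ k : ℕ, (q:ℂ)^(2*k) *
          (inner ℂ (ee k) ((A ^ l * (C θ) ^ n * (star (C θ)) ^ m) (ee k)) : ℂ) = 0 := by
        intro k; rw [hzero θ k, mul_zero]
      rw [tsum_congr h2, tsum_zero, mul_zero]
    rw [intervalIntegral.integral_congr h0]
    simp [hl]
end

section
/- For all l, n, m, k, k' ∈ ℕ and μ = −sgn(q)·λ, one has ⟪e_{k'}, A^l C_λ^m (C_λ*)^n e_k⟫ = (−sgn q)^{m+n} · conj(⟪e_{k'}, A^l C_μ^n (C_μ*)^m e_k⟫). (This is the matrix-entry form of the identity ψ^{2,λ}(α^l γ^m γ^{*n}) = (−sgn q)^{m+n} j ψ^{2,−sgn(q)λ}(α^l γ^n γ^{*m}) j, where j is coordinatewise complex conjugation on ℓ²(ℕ); it underlies the description of the modular conjugation J_φ of the dual of SU_q(2) on the level of direct integrals.) -/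
open scoped ComplexConjugate

/-- Matrix-entry form of the identity
`ψ^{2,λ}(α^l γ^m γ^{*n}) = (−sgn q)^{m+n} j ψ^{2,−sgn(q)λ}(α^l γ^n γ^{*m}) j`,
where `j` is coordinatewise complex conjugation on `ℓ²(ℕ)`. -/
theorem stmt_8 (q : ℝ) (hq0 : q ≠ 0) (hq1 : |q| < 1)
    (lam : ℂ) (hlam : ‖lam‖ = 1)
    (A : lp (fun _ : ℕ => ℂ) 2 →L[ℂ] lp (fun _ : ℕ => ℂ) 2)
    (hA0 : A (lp.single 2 0 (1 : ℂ)) = 0)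
    (hA : ∀ k : ℕ, A (lp.single 2 (k + 1) (1 : ℂ)) =
      ((Real.sqrt (1 - q ^ (2 * (k + 1))) : ℝ) : ℂ) • lp.single 2 k (1 : ℂ))
    (C : ℂ → (lp (fun _ : ℕ => ℂ) 2 →L[ℂ] lp (fun _ : ℕ => ℂ) 2))
    (hC : ∀ (ω : ℂ) (k : ℕ), C ω (lp.single 2 k (1 : ℂ)) =
      (ω * (q : ℂ) ^ k) • lp.single 2 k (1 : ℂ)) :
    ∀ l n m k k' : ℕ,
      (inner ℂ (lp.single 2 k' (1 : ℂ))
          ((A ^ l * (C lam) ^ m * (star (C lam)) ^ n) (lp.single 2 k (1 : ℂ))) : ℂ) =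
        ((-(Real.sign q) : ℝ) : ℂ) ^ (m + n) *
          (starRingEnd ℂ)
            ((inner ℂ (lp.single 2 k' (1 : ℂ))
              ((A ^ l * (C (-(Real.sign q : ℂ) * lam)) ^ n *
                (star (C (-(Real.sign q : ℂ) * lam))) ^ m) (lp.single 2 k (1 : ℂ))) : ℂ)) := by
  intro l n m k k'
  set e : ℕ → lp (fun _ : ℕ => ℂ) 2 := fun j => lp.single 2 j (1 : ℂ) with he
  -- star of C ω on basis
  have hCs : ∀ (ω : ℂ) (j : ℕ), star (C ω) (e j) = (conj ω * (q : ℂ) ^ j) • e j := by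
    intro ω j
    apply lp.ext
    funext i
    have h1 : (star (C ω) (e j)) i = inner ℂ (e i) (star (C ω) (e j)) := by
      simp [he, lp.inner_single_left]
    rw [h1, ContinuousLinearMap.star_eq_adjoint, ContinuousLinearMap.adjoint_inner_right,
      hC, inner_smul_left]
    have h2 : (inner ℂ (e i) (e j) : ℂ) = if i = j then 1 else 0 := by
      simp [he, lp.inner_single_left, lp.single_apply, Pi.single_apply]
    rw [h2]
    by_cases hij : i = j
    · subst hij
      simp [he, lp.single_apply_self, mul_comm]
    · simp [he, lp.single_apply_ne _ _ _ hij, hij]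
  -- powers of C and star C on basis
  have hCp : ∀ (ω : ℂ) (p j : ℕ), ((C ω) ^ p) (e j) = (ω * (q : ℂ) ^ j) ^ p • e j := by
    intro ω p j
    induction p with
    | zero => simp
    | succ p ih =>
      rw [pow_succ, ContinuousLinearMap.mul_apply,
        show (C ω) (e j) = (ω * (q : ℂ) ^ j) • e j from hC ω j, map_smul, ih,
        smul_smul, pow_succ]
      ring_nf
  have hCsp : ∀ (ω : ℂ) (p j : ℕ), ((star (C ω)) ^ p) (e j) = (conj ω * (q : ℂ) ^ j) ^ p • e j := by
    intro ω p j
    induction p with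
    | zero => simp
    | succ p ih =>
      rw [pow_succ, ContinuousLinearMap.mul_apply, hCs, map_smul, ih, smul_smul, pow_succ]
      ring_nf
  -- A^l on basis: real scalar times a single
  have hAp : ∀ (p j : ℕ), ∃ r : ℝ, (A ^ p) (e j) = (r : ℂ) • e (j - p) := by
    intro p
    induction p with
    | zero => intro j; exact ⟨1, by simp⟩
    | succ p ih =>
      intro j
      rw [pow_succ, ContinuousLinearMap.mul_apply]
      cases j with
      | zero =>
        refine ⟨0, ?_⟩
        rw [show (A : _) (e 0) = 0 from hA0]
        simp
      | succ j =>
        obtain ⟨r, hr⟩ := ih j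
        refine ⟨Real.sqrt (1 - q ^ (2 * (j + 1))) * r, ?_⟩
        rw [show (A : _) (e (j+1)) = ((Real.sqrt (1 - q ^ (2 * (j + 1))) : ℝ) : ℂ) • e j from hA j,
          map_smul, hr, smul_smul]
        have : j + 1 - (p + 1) = j - p := by omega
        rw [this]
        push_cast
        ring_nf
  obtain ⟨r, hr⟩ := hAp l k
  have hδ : (inner ℂ (e k') (e (k - l)) : ℂ) = if k' = k - l then 1 else 0 := by
    simp [he, lp.inner_single_left, lp.single_apply, Pi.single_apply]
  have hcalc : ∀ (ω : ℂ) (a b : ℕ),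
      (inner ℂ (e k') ((A ^ l * (C ω) ^ a * (star (C ω)) ^ b) (e k)) : ℂ) =
        (ω * (q : ℂ) ^ k) ^ a * (conj ω * (q : ℂ) ^ k) ^ b * (r : ℂ) *
          (if k' = k - l then 1 else 0) := by
    intro ω a b
    rw [ContinuousLinearMap.mul_apply, ContinuousLinearMap.mul_apply, hCsp, map_smul, hCp,
      map_smul, map_smul, hr, smul_smul, smul_smul, inner_smul_right, hδ]
    ring
  rw [hcalc lam m n, hcalc (-(Real.sign q : ℂ) * lam) n m]
  have hs2 : ((Real.sign q : ℂ)) ^ 2 = 1 := by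
    rcases lt_trichotomy q 0 with h | h | h
    · rw [Real.sign_of_neg h]; norm_num
    · exact absurd h hq0
    · rw [Real.sign_of_pos h]; norm_num
  have hcs : (starRingEnd ℂ) (-(Real.sign q : ℂ) * lam) = -(Real.sign q : ℂ) * (starRingEnd ℂ) lam := by
    simp [map_mul, Complex.conj_ofReal]
  simp only [map_mul, map_pow, hcs, Complex.conj_conj, Complex.conj_ofReal,
    apply_ite (starRingEnd ℂ), map_one, map_zero, map_neg]
  push_cast
  split_ifs with h
  · rw [mul_one, mul_one,
      show (-(Real.sign q : ℂ) * (starRingEnd ℂ) lam * (q : ℂ) ^ k) =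
        (-(Real.sign q : ℂ)) * ((starRingEnd ℂ) lam * (q : ℂ) ^ k) by ring,
      show (-(Real.sign q : ℂ) * lam * (q : ℂ) ^ k) =
        (-(Real.sign q : ℂ)) * (lam * (q : ℂ) ^ k) by ring]
    have h1 : (-(Real.sign q : ℂ)) ^ (m + n) *
        ((-(Real.sign q : ℂ)) ^ n * (-(Real.sign q : ℂ)) ^ m) = 1 := by
      rw [← pow_add, ← pow_add, show m + n + (n + m) = 2 * (m + n) by omega, pow_mul,
        neg_sq, hs2, one_pow]
    calc (lam * (q : ℂ) ^ k) ^ m * ((starRingEnd ℂ) lam * (q : ℂ) ^ k) ^ n * (r : ℂ)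
        = ((-(Real.sign q : ℂ)) ^ (m + n) * ((-(Real.sign q : ℂ)) ^ n * (-(Real.sign q : ℂ)) ^ m)) *
            ((lam * (q : ℂ) ^ k) ^ m * ((starRingEnd ℂ) lam * (q : ℂ) ^ k) ^ n * (r : ℂ)) := by
          rw [h1, one_mul]
      _ = (-(Real.sign q : ℂ)) ^ (m + n) *
            ((-(Real.sign q : ℂ) * ((starRingEnd ℂ) lam * (q : ℂ) ^ k)) ^ n *
              (-(Real.sign q : ℂ) * (lam * (q : ℂ) ^ k)) ^ m * (r : ℂ)) := by
          simp only [mul_pow]; ring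
  · simp
end

section
/- Let N be a nonzero even integer and let ρ ∈ ℂ with Re(ρ) < 0 and Im(ρ) = N/(2π). Let Γ = {exp((k + it)/ρ) : k ∈ ℤ, t ∈ ℝ} ⊆ ℂ. Then the closure of Γ in ℂ equals Γ ∪ {0}. -/
open Complex Filter Topology

/-- Case 3 of the parameter groups of the quantum az+b group: for `ρ ∈ ℂ` with
`Re ρ < 0` and `Im ρ = N/(2π)` (`N` a nonzero even integer), the closure of
`Γ = {exp((k+it)/ρ) : k ∈ ℤ, t ∈ ℝ}` in `ℂ` is `Γ ∪ {0}`. -/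
theorem stmt_13 (N : ℤ) (hN0 : N ≠ 0) (hNeven : Even N) (ρ : ℂ)
    (hρre : ρ.re < 0) (hρim : ρ.im = (N : ℝ) / (2 * Real.pi)) :
    closure {z : ℂ | ∃ (k : ℤ) (t : ℝ),
        z = Complex.exp (((k : ℂ) + (t : ℂ) * Complex.I) / ρ)} =
      {z : ℂ | ∃ (k : ℤ) (t : ℝ),
        z = Complex.exp (((k : ℂ) + (t : ℂ) * Complex.I) / ρ)} ∪ {0} := by
  have hπ : (0:ℝ) < Real.pi := Real.pi_pos
  have hρ : ρ ≠ 0 := by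
    intro h; rw [h] at hρre; simp at hρre
  set S := {z : ℂ | ∃ (k : ℤ) (t : ℝ),
      z = Complex.exp (((k : ℂ) + (t : ℂ) * Complex.I) / ρ)} with hSdef
  have hS0 : ∀ z ∈ S, z ≠ 0 := by
    rintro z ⟨k, t, rfl⟩
    exact Complex.exp_ne_zero _
  set φ : ℂ → ℂ := fun z =>
    Complex.exp (((2 * Real.pi * ρ.re * Real.log (‖z‖) : ℝ) : ℂ) * Complex.I)
      * (((‖z‖ : ℂ)) / z) ^ N with hφdef
  -- φ z = exp(2π Re(ρ log z) i) for z ≠ 0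
  have phi_eq : ∀ z : ℂ, z ≠ 0 →
      φ z = Complex.exp (((2 * Real.pi * (ρ * Complex.log z).re : ℝ) : ℂ) * Complex.I) := by
    intro z hz
    have habs : (‖z‖ : ℝ) ≠ 0 := norm_ne_zero_iff.mpr hz
    have habsC : ((‖z‖ : ℝ) : ℂ) ≠ 0 := by exact_mod_cast habs
    have hre : (ρ * Complex.log z).re
        = ρ.re * Real.log (‖z‖) - ρ.im * Complex.arg z := by
      simp [Complex.mul_re, Complex.log_re, Complex.log_im]
    have h2πb : 2 * Real.pi * ρ.im = (N : ℝ) := by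
      rw [hρim]; field_simp
    have hexp_arg : Complex.exp ((Complex.arg z : ℂ) * Complex.I)
        = z / (‖z‖ : ℂ) := by
      rw [eq_div_iff habsC, mul_comm]
      exact Complex.norm_mul_exp_arg_mul_I z
    have hpow : (((‖z‖ : ℂ)) / z) ^ N
        = Complex.exp (((- (N : ℝ) * Complex.arg z : ℝ) : ℂ) * Complex.I) := by
      have h1 : ((‖z‖ : ℂ)) / z = Complex.exp (-((Complex.arg z : ℂ) * Complex.I)) := by
        rw [Complex.exp_neg, hexp_arg, inv_div]
      rw [h1, ← Complex.exp_int_mul]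
      congr 1
      push_cast
      ring
    have h2πbC : ((N : ℤ) : ℂ) = 2 * (Real.pi : ℂ) * (ρ.im : ℂ) := by
      have h := congrArg (fun x : ℝ => (x : ℂ)) h2πb
      push_cast at h
      linear_combination -h
    rw [hφdef]
    simp only
    rw [hpow, ← Complex.exp_add]
    congr 1
    rw [hre]
    push_cast
    linear_combination (-(Complex.arg z : ℂ) * Complex.I) * h2πbC
  -- membership characterization
  have mem_iff : ∀ z : ℂ, z ≠ 0 → (z ∈ S ↔ φ z = 1) := by
    intro z hz
    rw [phi_eq z hz, Complex.exp_eq_one_iff]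
    constructor
    · rintro ⟨k, t, hzkt⟩
      have h1 : Complex.exp (Complex.log z)
          = Complex.exp (((k : ℂ) + (t : ℂ) * Complex.I) / ρ) := by
        rw [Complex.exp_log hz, hzkt]
      rw [Complex.exp_eq_exp_iff_exists_int] at h1
      obtain ⟨m, hm⟩ := h1
      have hρlog : ρ * Complex.log z
          = ((k : ℂ) + (t : ℂ) * Complex.I) + (m : ℂ) * (2 * (Real.pi : ℂ) * Complex.I) * ρ := by
        rw [hm]; field_simp
      have hA : (((k : ℂ) + (t : ℂ) * Complex.I)).re = (k : ℝ) := by simp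
      have hB : ((m : ℂ) * (2 * (Real.pi : ℂ) * Complex.I) * ρ).re
          = -((m : ℝ) * (2 * Real.pi * ρ.im)) := by
        simp [Complex.mul_re, Complex.mul_im]
        ring
      have hcan : 2 * Real.pi * ((N : ℝ) / (2 * Real.pi)) = (N : ℝ) := by
        field_simp
      have hre2 : (ρ * Complex.log z).re = (k : ℝ) - (m : ℝ) * (N : ℝ) := by
        rw [hρlog, Complex.add_re, hA, hB, hρim, hcan]
        ring
      refine ⟨k - m * N, ?_⟩
      rw [hre2]
      push_cast
      ring
    · rintro ⟨n, hn⟩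
      have h3 : ((2 : ℂ) * Real.pi * Complex.I) ≠ 0 := by
        simp [Real.pi_ne_zero, Complex.I_ne_zero]
      have hre3 : ((ρ * Complex.log z).re : ℂ) = (n : ℂ) := by
        apply mul_left_cancel₀ h3
        push_cast at hn
        linear_combination hn
      refine ⟨n, (ρ * Complex.log z).im, ?_⟩
      have heq : ((n : ℂ) + ((ρ * Complex.log z).im : ℂ) * Complex.I) = ρ * Complex.log z := by
        rw [← hre3]
        exact Complex.re_add_im _
      rw [heq, mul_div_cancel_left₀ _ hρ, Complex.exp_log hz]
  have hcont : ∀ z : ℂ, z ≠ 0 → ContinuousAt φ z := by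
    intro z hz
    have habs : ‖z‖ ≠ 0 := norm_ne_zero_iff.mpr hz
    have h1 : ContinuousAt (fun w : ℂ =>
        Complex.exp (((2 * Real.pi * ρ.re * Real.log (‖w‖) : ℝ) : ℂ) * Complex.I)) z := by
      apply Complex.continuous_exp.continuousAt.comp
      apply ContinuousAt.mul _ continuousAt_const
      apply Complex.continuous_ofReal.continuousAt.comp
      exact continuousAt_const.mul
        ((Real.continuousAt_log habs).comp continuous_norm.continuousAt)
    have h2 : ContinuousAt (fun w : ℂ => (((‖w‖ : ℂ)) / w) ^ N) z := by
      have hbase : ContinuousAt (fun w : ℂ => ((‖w‖ : ℂ)) / w) z :=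
        ((Complex.continuous_ofReal.comp continuous_norm).continuousAt).div
          continuousAt_id hz
      have hne : ((‖z‖ : ℂ)) / z ≠ 0 := by
        apply div_ne_zero _ hz
        exact_mod_cast habs
      exact hbase.zpow₀ N (Or.inl hne)
    exact h1.mul h2
  apply Set.eq_of_subset_of_subset
  · intro z hz
    by_cases h0 : z = 0
    · right; simp [h0]
    · left
      have hmem : φ z ∈ closure (φ '' S) :=
        ((hcont z h0).continuousWithinAt).mem_closure_image hz
      have himg : φ '' S ⊆ {1} := by
        rintro _ ⟨w, hw, rfl⟩
        exact (mem_iff w (hS0 w hw)).1 hw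
      have hone : φ z = 1 := by
        have := (closure_mono himg) hmem
        rwa [isClosed_singleton.closure_eq, Set.mem_singleton_iff] at this
      exact (mem_iff z h0).2 hone
  · intro z hz
    rcases hz with hz | hz
    · exact subset_closure hz
    · rw [Set.mem_singleton_iff] at hz; subst hz
      have hc : ρ.re / Complex.normSq ρ < 0 :=
        div_neg_of_neg_of_pos hρre (Complex.normSq_pos.2 hρ)
      have hre : ∀ n : ℕ, ((n : ℂ) / ρ).re = (n : ℝ) * (ρ.re / Complex.normSq ρ) := by
        intro n
        rw [Complex.div_re]
        simp
        ring
      have htend : Filter.Tendsto (fun n : ℕ => Complex.exp ((n : ℂ) / ρ)) atTop (𝓝 0) := by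
        rw [tendsto_zero_iff_norm_tendsto_zero]
        have hn : ∀ n : ℕ, ‖Complex.exp ((n : ℂ) / ρ)‖
            = Real.exp ((n : ℝ) * (ρ.re / Complex.normSq ρ)) := by
          intro n
          rw [Complex.norm_exp, hre]
        simp only [hn]
        apply Real.tendsto_exp_atBot.comp
        exact Filter.Tendsto.atTop_mul_const_of_neg hc tendsto_natCast_atTop_atTop
      refine mem_closure_of_tendsto htend (Filter.Eventually.of_forall fun n => ?_)
      exact ⟨(n : ℤ), 0, by push_cast; norm_num⟩
end
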